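/- For any trace-free symmetric real 3×3 matrix M, one has −4·det(M) ≤ (2√6/9)·|M|³, where |M| is the Frobenius norm of M; moreover equality holds if and only if the two largest eigenvalues of M are equal. -/
import Mathlib

set_option maxHeartbeats 1000000

open Matrix

lemma scalar_ineq (a b c : ℝ) (hab : a ≤ b) (hbc : b ≤ c) (hsum : a + b + c = 0) :
    -4 * (a*b*c) ≤ (2 * Real.sqrt 6 / 9) * (Real.sqrt (a^2+b^2+c^2))^3 ∧
    (-4 * (a*b*c) = (2 * Real.sqrt 6 / 9) * (Real.sqrt (a^2+b^2+c^2))^3 ↔ b = c) := by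
  have hs : (0:ℝ) ≤ a^2+b^2+c^2 := by positivity
  have hid : (a^2+b^2+c^2)^3 - 54*(a*b*c)^2 = 2*((a-b)*(b-c)*(c-a))^2 := by
    have hc : c = -a - b := by linarith
    subst hc; ring
  have hkey : 54*(a*b*c)^2 ≤ (a^2+b^2+c^2)^3 := by
    nlinarith [hid, sq_nonneg ((a-b)*(b-c)*(c-a))]
  obtain ⟨t, ht0, ht2⟩ : ∃ t : ℝ, 0 ≤ t ∧ t^2 = a^2+b^2+c^2 :=
    ⟨Real.sqrt (a^2+b^2+c^2), Real.sqrt_nonneg _, Real.sq_sqrt hs⟩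
  have htdef : Real.sqrt (a^2+b^2+c^2) = t := by
    rw [← ht2, Real.sqrt_sq ht0]
  obtain ⟨u, hu0, hu2⟩ : ∃ u : ℝ, 0 ≤ u ∧ u^2 = 6 :=
    ⟨Real.sqrt 6, Real.sqrt_nonneg _, Real.sq_sqrt (by norm_num)⟩
  have hudef : Real.sqrt 6 = u := by
    rw [← hu2, Real.sqrt_sq hu0]
  rw [htdef, hudef]
  have hR0 : 0 ≤ (2 * u / 9) * t^3 := by positivity
  have hRsq : ((2 * u / 9) * t^3)^2 = (8/27) * (a^2+b^2+c^2)^3 := by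
    have h : ((2 * u / 9) * t^3)^2 = (4/81) * u^2 * (t^2)^3 := by ring
    rw [h, hu2, ht2]; ring
  have hsq : (-4*(a*b*c))^2 ≤ ((2 * u / 9) * t^3)^2 := by
    rw [hRsq]; linarith [hkey]
  have hle : -4 * (a*b*c) ≤ (2 * u / 9) * t^3 := by
    nlinarith [hsq, hR0]
  refine ⟨hle, ?_, ?_⟩
  · intro heq
    have h1 : (-4*(a*b*c))^2 = (8/27)*(a^2+b^2+c^2)^3 := by rw [heq, hRsq]
    have hz : ((a-b)*(b-c)*(c-a))^2 = 0 := by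
      nlinarith [hid, h1, sq_nonneg ((a-b)*(b-c)*(c-a))]
    have hz' : (a-b)*(b-c)*(c-a) = 0 := pow_eq_zero_iff (by norm_num) |>.mp hz
    have habc : a*b*c ≤ 0 := by linarith [heq, hR0]
    rcases mul_eq_zero.mp hz' with h | h
    · rcases mul_eq_zero.mp h with h | h
      · have hab' : a = b := by linarith [sub_eq_zero.mp h]
        have hc2 : c = -2*a := by linarith
        have ha0 : a ≤ 0 := by linarith
        have ha3 : a*b*c = -2*a^3 := by rw [← hab', hc2]; ring
        have ha3' : (0:ℝ) ≤ a^3 := by linarith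
        have ha0' : 0 ≤ a := (Odd.pow_nonneg_iff (⟨1, by norm_num⟩ : Odd 3)).mp ha3'
        have : a = 0 := le_antisymm ha0 ha0'
        linarith
      · linarith [sub_eq_zero.mp h]
    · have : c = a := sub_eq_zero.mp h
      linarith
  · intro heq
    subst heq
    have ha : a = -2*b := by linarith
    subst ha
    have hb0 : 0 ≤ b := by linarith
    have htb : t = u * b := by
      have h1 : t^2 = (u*b)^2 := by rw [ht2]; linear_combination (-(b^2))*hu2
      have h2 : 0 ≤ u * b := mul_nonneg hu0 hb0
      nlinarith [h1, ht0, h2]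
    rw [htb]
    linear_combination (-(2*b^3/9))*(u^2+6)*hu2

/-- For a trace-free symmetric real 3×3 matrix `M` with eigenvalues `l1 ≤ l2 ≤ l3`
(given by an orthonormal spectral decomposition), one has
`−4 det M ≤ (2√6/9)|M|³` with equality iff `l2 = l3`. -/
theorem stmt1 (M : Matrix (Fin 3) (Fin 3) ℝ) (hsym : M.IsSymm) (htr : M.trace = 0)
    (l1 l2 l3 : ℝ) (v1 v2 v3 : Fin 3 → ℝ)
    (h12 : l1 ≤ l2) (h23 : l2 ≤ l3)
    (h11 : v1 ⬝ᵥ v1 = 1) (h22 : v2 ⬝ᵥ v2 = 1) (h33 : v3 ⬝ᵥ v3 = 1)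
    (h12o : v1 ⬝ᵥ v2 = 0) (h13o : v1 ⬝ᵥ v3 = 0) (h23o : v2 ⬝ᵥ v3 = 0)
    (hM : M = l1 • Matrix.vecMulVec v1 v1 + l2 • Matrix.vecMulVec v2 v2
            + l3 • Matrix.vecMulVec v3 v3) :
    -4 * M.det ≤ (2 * Real.sqrt 6 / 9) * (Real.sqrt (∑ i, ∑ j, M i j ^ 2)) ^ 3 ∧
    (-4 * M.det = (2 * Real.sqrt 6 / 9) * (Real.sqrt (∑ i, ∑ j, M i j ^ 2)) ^ 3 ↔
      l2 = l3) := by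
  set P : Matrix (Fin 3) (Fin 3) ℝ := Matrix.of ![v1, v2, v3] with hP
  simp only [dotProduct, Fin.sum_univ_three] at h11 h22 h33 h12o h13o h23o
  have hPPT : P * Pᵀ = 1 := by
    ext i j
    fin_cases i <;> fin_cases j <;>
      simp [hP, Matrix.mul_apply, Matrix.transpose_apply, Matrix.one_apply,
        Fin.sum_univ_three, Matrix.vecHead, Matrix.vecTail] <;>
      linarith
  have hPTP : Pᵀ * P = 1 := mul_eq_one_comm.mp hPPT
  have hD : M = Pᵀ * Matrix.diagonal ![l1,l2,l3] * P := by
    subst hM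
    ext i j
    fin_cases i <;> fin_cases j <;>
      simp [hP, Matrix.mul_apply, Matrix.transpose_apply, Matrix.diagonal,
        Matrix.vecMulVec_apply, Fin.sum_univ_three, Matrix.vecHead,
        Matrix.vecTail] <;> ring
  have hdet : M.det = l1*l2*l3 := by
    have h1 : P.det * P.det = 1 := by
      have h := congrArg Matrix.det hPPT
      rwa [Matrix.det_mul, Matrix.det_transpose, Matrix.det_one] at h
    rw [hD, Matrix.det_mul, Matrix.det_mul, Matrix.det_transpose,
      Matrix.det_diagonal]
    simp only [Fin.prod_univ_three]
    simp only [Matrix.cons_val_zero, Matrix.cons_val_one, Matrix.head_cons,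
      Matrix.cons_val_two, Matrix.tail_cons]
    linear_combination (l1*l2*l3)*h1
  have htrace : l1 + l2 + l3 = 0 := by
    have h : M.trace = l1+l2+l3 := by
      rw [hD, Matrix.trace_mul_cycle, hPPT, one_mul, Matrix.trace_diagonal]
      simp [Fin.sum_univ_three]
    rw [h] at htr; exact htr
  have hfro : ∑ i, ∑ j, M i j ^ 2 = l1^2+l2^2+l3^2 := by
    have cancel : ∀ X : Matrix (Fin 3) (Fin 3) ℝ, P * (Pᵀ * X) = X := by
      intro X; rw [← Matrix.mul_assoc, hPPT, one_mul]
    have hdd : Matrix.diagonal ![l1,l2,l3] * Matrix.diagonal ![l1,l2,l3]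
        = Matrix.diagonal ![l1^2,l2^2,l3^2] := by
      rw [Matrix.diagonal_mul_diagonal]
      exact congrArg Matrix.diagonal (by
        funext i; fin_cases i <;> simp [sq])
    have hMM : M * M = Pᵀ * Matrix.diagonal ![l1^2,l2^2,l3^2] * P := by
      rw [hD]
      simp only [Matrix.mul_assoc]
      rw [cancel, ← hdd]
      simp only [Matrix.mul_assoc]
    have hs' : ∀ i j, M j i = M i j := fun i j => hsym.apply i j
    have htr2 : (M * M).trace = ∑ i, ∑ j, M i j ^ 2 := by
      rw [Matrix.trace]
      simp only [Matrix.diag, Matrix.mul_apply]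
      congr 1
      funext i
      congr 1
      funext j
      rw [hs' i j, sq]
    rw [← htr2, hMM, Matrix.trace_mul_cycle, hPPT, one_mul, Matrix.trace_diagonal]
    simp [Fin.sum_univ_three]
  rw [hdet, hfro]
  exact scalar_ineq l1 l2 l3 h12 h23 htrace
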